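/- Assume pairwise identifiability and uniform boundedness with constant B. Then there exist δ∈(0,1/2) and n_cen∈ℕ such that for all distinct y,y'∈𝒴 and all query plans r with effective sample size n_{y,y'}(r) ≥ n_cen: every minimizer s* of the map s ↦ log P̄_{y,y'}(r;s) over [0,1] lies in [δ, 1−δ] and satisfies E_{ℚ_{y,y',r,s*}}[Δ_{y,y'}(r)] = 0. -/

import Mathlib

open Finset Set
open scoped Classical BigOperators ENNReal

namespace MultiLLM

noncomputable section

variable {L K : ℕ}

/-- The observation space for a query plan `r`: model `m` is queried `r m` times. -/
abbrev Obs (𝒳 : Fin K → Type) (r : Fin K → ℕ) := ∀ m : Fin K, Fin (r m) → 𝒳 m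

variable {𝒳 : Fin K → Type} [∀ m, Fintype (𝒳 m)]

/-- Conditional likelihood of an observation vector given `Y = y`. -/
def prodLik (p : ∀ m : Fin K, 𝒳 m → Fin L → ℝ) (r : Fin K → ℕ) (y : Fin L)
    (x : Obs 𝒳 r) : ℝ :=
  ∏ m, ∏ t, p m (x m t) y

/-- MAP score of label `y` at observation `x`. -/
def score (π : Fin L → ℝ) (p : ∀ m : Fin K, 𝒳 m → Fin L → ℝ) (r : Fin K → ℕ)
    (y : Fin L) (x : Obs 𝒳 r) : ℝ :=
  π y * prodLik p r y x

/-- Conditional probability of an event `E` given `Y = y`. -/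
def condProb (p : ∀ m : Fin K, 𝒳 m → Fin L → ℝ) (r : Fin K → ℕ) (y : Fin L)
    (E : Set (Obs 𝒳 r)) : ℝ :=
  ∑ x : Obs 𝒳 r, E.indicator (prodLik p r y) x

/-- `Yhat` is a MAP estimator for plan `r`. -/
def IsMAP (π : Fin L → ℝ) (p : ∀ m : Fin K, 𝒳 m → Fin L → ℝ) (r : Fin K → ℕ)
    (Yhat : Obs 𝒳 r → Fin L) : Prop :=
  ∀ x : Obs 𝒳 r, ∀ y : Fin L, score π p r y x ≤ score π p r (Yhat x) x

/-- Statewise error probability of estimator `Yhat` when the truth is `y`. -/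
def Pe (p : ∀ m : Fin K, 𝒳 m → Fin L → ℝ) (r : Fin K → ℕ) (y : Fin L)
    (Yhat : Obs 𝒳 r → Fin L) : ℝ :=
  condProb p r y {x | Yhat x ≠ y}

/-- Log-likelihood difference between competing label `y'` and true label `y`. -/
def LLdiff (π : Fin L → ℝ) (p : ∀ m : Fin K, 𝒳 m → Fin L → ℝ) (r : Fin K → ℕ)
    (y y' : Fin L) (x : Obs 𝒳 r) : ℝ :=
  Real.log (π y' / π y) + ∑ m, ∑ t, Real.log (p m (x m t) y' / p m (x m t) y)

/-- Chernoff affinity factor `M_m^{(y,y')}(s)`. -/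
def chernoffM (p : ∀ m : Fin K, 𝒳 m → Fin L → ℝ) (m : Fin K) (y y' : Fin L)
    (s : ℝ) : ℝ :=
  ∑ x : 𝒳 m, p m x y ^ (1 - s) * p m x y' ^ s

/-- Pairwise Chernoff proxy `P̄_{y,y'}(r; s)`. -/
def proxy (π : Fin L → ℝ) (p : ∀ m : Fin K, 𝒳 m → Fin L → ℝ) (r : Fin K → ℕ)
    (y y' : Fin L) (s : ℝ) : ℝ :=
  (π y' / π y) ^ s * ∏ m, chernoffM p m y y' s ^ r m

/-- Optimized pairwise Chernoff proxy `P̄_{y,y'}(r) = min_{s ∈ [0,1]} P̄_{y,y'}(r; s)`. -/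
def proxyOpt (π : Fin L → ℝ) (p : ∀ m : Fin K, 𝒳 m → Fin L → ℝ) (r : Fin K → ℕ)
    (y y' : Fin L) : ℝ :=
  sInf ((fun s => proxy π p r y y' s) '' Set.Icc (0 : ℝ) 1)

/-- Surrogate statewise error bound `P̄_e(y; r)`. -/
def PeBar (π : Fin L → ℝ) (p : ∀ m : Fin K, 𝒳 m → Fin L → ℝ) (r : Fin K → ℕ)
    (y : Fin L) : ℝ :=
  ∑ y' ∈ Finset.univ.filter (fun y' => y' ≠ y), proxyOpt π p r y y'

/-- Total cost of a query plan. -/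
def cost (c : Fin K → ℝ) (r : Fin K → ℕ) : ℝ := ∑ m, c m * (r m : ℝ)

/-- Effective sample size `n_{y,y'}(r)`: total queries to models distinguishing `y,y'`. -/
def effSample (p : ∀ m : Fin K, 𝒳 m → Fin L → ℝ) (r : Fin K → ℕ) (y y' : Fin L) : ℕ :=
  ∑ m ∈ Finset.univ.filter (fun m => (fun x => p m x y) ≠ (fun x => p m x y')), r m

/-- Tilted per-symbol distribution `q_m^{(y,y')}(x; s)`. -/
def qTilt (p : ∀ m : Fin K, 𝒳 m → Fin L → ℝ) (m : Fin K) (y y' : Fin L) (s : ℝ)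
    (x : 𝒳 m) : ℝ :=
  p m x y ^ (1 - s) * p m x y' ^ s / chernoffM p m y y' s

/-- Weight of an observation under the tilted product measure `ℚ_{y,y',r,s}`. -/
def Qweight (p : ∀ m : Fin K, 𝒳 m → Fin L → ℝ) (r : Fin K → ℕ) (y y' : Fin L)
    (s : ℝ) (x : Obs 𝒳 r) : ℝ :=
  ∏ m, ∏ t, qTilt p m y y' s (x m t)

/-- Expectation under the tilted product measure `ℚ_{y,y',r,s}`. -/
def Qexp (p : ∀ m : Fin K, 𝒳 m → Fin L → ℝ) (r : Fin K → ℕ) (y y' : Fin L)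
    (s : ℝ) (f : Obs 𝒳 r → ℝ) : ℝ :=
  ∑ x : Obs 𝒳 r, Qweight p r y y' s x * f x

/-- Probability of an event under the tilted product measure `ℚ_{y,y',r,s}`. -/
def Qprob (p : ∀ m : Fin K, 𝒳 m → Fin L → ℝ) (r : Fin K → ℕ) (y y' : Fin L)
    (s : ℝ) (E : Set (Obs 𝒳 r)) : ℝ :=
  ∑ x : Obs 𝒳 r, E.indicator (Qweight p r y y' s) x

/-- Variance under the tilted product measure `ℚ_{y,y',r,s}`. -/
def Qvar (p : ∀ m : Fin K, 𝒳 m → Fin L → ℝ) (r : Fin K → ℕ) (y y' : Fin L)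
    (s : ℝ) (f : Obs 𝒳 r → ℝ) : ℝ :=
  Qexp p r y y' s (fun x => (f x - Qexp p r y y' s f) ^ 2)

/-- True feasible set `ℛ(α)` (with MAP estimator family `Yhat`). -/
def RtrueSet (p : ∀ m : Fin K, 𝒳 m → Fin L → ℝ)
    (Yhat : ∀ r : Fin K → ℕ, Obs 𝒳 r → Fin L) (α : Fin L → ℝ) : Set (Fin K → ℕ) :=
  {r | ∀ y, Pe p r y (Yhat r) ≤ α y}

/-- Surrogate feasible set `ℛ̄(α)`. -/
def RbarSet (π : Fin L → ℝ) (p : ∀ m : Fin K, 𝒳 m → Fin L → ℝ)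
    (α : Fin L → ℝ) : Set (Fin K → ℕ) :=
  {r | ∀ y, PeBar π p r y ≤ α y}

/-- True optimal cost `OPT(α)` (with `+∞` for the empty feasible set). -/
def OPTtrue (p : ∀ m : Fin K, 𝒳 m → Fin L → ℝ)
    (Yhat : ∀ r : Fin K → ℕ, Obs 𝒳 r → Fin L) (c : Fin K → ℝ) (α : Fin L → ℝ) : ℝ≥0∞ :=
  ⨅ r ∈ RtrueSet p Yhat α, ENNReal.ofReal (cost c r)

/-- Surrogate optimal cost `OPT̄(α)` (with `+∞` for the empty feasible set). -/
def OPTbar (π : Fin L → ℝ) (p : ∀ m : Fin K, 𝒳 m → Fin L → ℝ)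
    (c : Fin K → ℝ) (α : Fin L → ℝ) : ℝ≥0∞ :=
  ⨅ r ∈ RbarSet π p α, ENNReal.ofReal (cost c r)


-- ===== auxiliary material for interior_minimizers =====

lemma sum_pi_prod' {ι : Type*} [Fintype ι] [DecidableEq ι] {β : ι → Type*} [∀ i, Fintype (β i)]
    (F : ∀ i, β i → ℝ) :
    ∑ x : ∀ i, β i, ∏ i, F i (x i) = ∏ i, ∑ v, F i v := by
  rw [Finset.prod_univ_sum (fun _ => Finset.univ) F, Fintype.piFinset_univ]

lemma gibbs' {ι : Type*} [Fintype ι] (u v : ι → ℝ) (hu : ∀ x, 0 < u x) (hv : ∀ x, 0 < v x)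
    (h1 : ∑ x, u x = ∑ x, v x) (hne : u ≠ v) :
    ∑ x, u x * Real.log (v x / u x) < 0 := by
  classical
  have key : ∑ x, u x * Real.log (v x / u x) < ∑ x, (v x - u x) := by
    apply Finset.sum_lt_sum
    · intro i _
      have h := Real.log_le_sub_one_of_pos (div_pos (hv i) (hu i))
      have h2 := mul_le_mul_of_nonneg_left h (le_of_lt (hu i))
      have h3 : u i * (v i / u i - 1) = v i - u i := by
        field_simp [(hu i).ne']
      linarith
    · obtain ⟨i, hi⟩ := Function.ne_iff.mp hne
      refine ⟨i, Finset.mem_univ i, ?_⟩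
      have hne1 : v i / u i ≠ 1 := by
        intro h
        exact hi ((div_eq_one_iff_eq (ne_of_gt (hu i))).mp h).symm
      have h := Real.log_lt_sub_one_of_pos (div_pos (hv i) (hu i)) hne1
      have h2 := mul_lt_mul_of_pos_left h (hu i)
      have h3 : u i * (v i / u i - 1) = v i - u i := by
        field_simp [(hu i).ne']
      linarith
  have h0 : ∑ x, (v x - u x) = 0 := by rw [Finset.sum_sub_distrib, h1]; ring
  linarith

lemma exp_sub_one_le' (t : ℝ) : Real.exp t - 1 ≤ t * Real.exp t := by
  have h := Real.add_one_le_exp (-t)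
  have h2 : Real.exp (-t) * Real.exp t = 1 := by
    rw [← Real.exp_add]; simp
  nlinarith [Real.exp_pos t]

lemma phi_le' {ι : Type*} [Fintype ι] (w ℓ : ι → ℝ) (B1 κ s : ℝ)
    (hw : ∀ x, 0 ≤ w x) (hw1 : ∑ x, w x = 1) (hb : ∀ x, |ℓ x| ≤ B1)
    (hB1 : 0 ≤ B1) (hκ : 0 < κ) (hD : κ ≤ -∑ x, w x * ℓ x) (hs : 0 ≤ s)
    (hsmall : (Real.exp (2*s*B1) - 1) * (B1 + κ) ≤ κ/2) :
    ∑ x, w x * Real.exp (s * ℓ x) * ℓ x ≤ -(κ/2) * ∑ x, w x * Real.exp (s * ℓ x) := by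
  classical
  set E := Real.exp (s * B1) with hE
  have hEpos : 0 < E := Real.exp_pos _
  have hE1 : 1 ≤ E := Real.one_le_exp (by positivity)
  have hEn : Real.exp (-(s*B1)) = E⁻¹ := Real.exp_neg _
  have hEEinv : E⁻¹ ≤ E := le_trans (inv_le_one_of_one_le₀ hE1) hE1
  have hB1E : 0 ≤ (E - E⁻¹) * B1 := mul_nonneg (by linarith) hB1
  have hpt : ∀ x, w x * Real.exp (s * ℓ x) * ℓ x ≤
      w x * (E⁻¹ * ℓ x + (E - E⁻¹) * B1) := by
    intro x
    have hbl : -B1 ≤ ℓ x := (abs_le.mp (hb x)).1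
    have hbu : ℓ x ≤ B1 := (abs_le.mp (hb x)).2
    have core : Real.exp (s * ℓ x) * ℓ x ≤ E⁻¹ * ℓ x + (E - E⁻¹) * B1 := by
      rcases le_or_gt 0 (ℓ x) with hl | hl
      · have h1 : Real.exp (s * ℓ x) ≤ E :=
          Real.exp_le_exp.mpr (mul_le_mul_of_nonneg_left hbu hs)
        have h2 : Real.exp (s * ℓ x) * ℓ x ≤ E * ℓ x :=
          mul_le_mul_of_nonneg_right h1 hl
        have h3 : (E - E⁻¹) * ℓ x ≤ (E - E⁻¹) * B1 :=
          mul_le_mul_of_nonneg_left hbu (by linarith)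
        nlinarith
      · have h1 : E⁻¹ ≤ Real.exp (s * ℓ x) := by
          rw [← hEn]
          exact Real.exp_le_exp.mpr (by nlinarith)
        have h2 : Real.exp (s * ℓ x) * ℓ x ≤ E⁻¹ * ℓ x := by nlinarith
        linarith
    rw [mul_assoc]
    exact mul_le_mul_of_nonneg_left core (hw x)
  have hMpt : ∀ x, w x * Real.exp (s * ℓ x) ≤ w x * E := by
    intro x
    refine mul_le_mul_of_nonneg_left ?_ (hw x)
    exact Real.exp_le_exp.mpr (mul_le_mul_of_nonneg_left (abs_le.mp (hb x)).2 hs)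
  have hN : ∑ x, w x * Real.exp (s * ℓ x) * ℓ x ≤
      E⁻¹ * (∑ x, w x * ℓ x) + (E - E⁻¹) * B1 := by
    calc ∑ x, w x * Real.exp (s * ℓ x) * ℓ x
        ≤ ∑ x, w x * (E⁻¹ * ℓ x + (E - E⁻¹) * B1) := Finset.sum_le_sum (fun x _ => hpt x)
      _ = E⁻¹ * (∑ x, w x * ℓ x) + (E - E⁻¹) * B1 * ∑ x, w x := by
          rw [Finset.mul_sum, Finset.mul_sum, ← Finset.sum_add_distrib]
          exact Finset.sum_congr rfl (fun x _ => by ring)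
      _ = E⁻¹ * (∑ x, w x * ℓ x) + (E - E⁻¹) * B1 := by rw [hw1, mul_one]
  have hM : ∑ x, w x * Real.exp (s * ℓ x) ≤ E := by
    calc ∑ x, w x * Real.exp (s * ℓ x) ≤ ∑ x, w x * E :=
        Finset.sum_le_sum (fun x _ => hMpt x)
      _ = E := by rw [← Finset.sum_mul, hw1, one_mul]
  have hEE : E * E⁻¹ = 1 := mul_inv_cancel₀ (ne_of_gt hEpos)
  have hX1 : 1 ≤ E * E := one_le_mul_of_one_le_of_one_le hE1 hE1
  have hE2 : Real.exp (2*s*B1) = E * E := by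
    rw [← Real.exp_add]; congr 1; ring
  have hsum_le : ∑ x, w x * ℓ x ≤ -κ := by linarith
  have hXg : (0:ℝ) ≤ E * E - 1 := by linarith
  have hA : (E*E - 1) * B1 + (E*E - 1) * κ ≤ κ/2 := by nlinarith [hsmall]
  have hB2 : (E*E - 1) * (κ/2) ≤ (E*E - 1) * κ :=
    mul_le_mul_of_nonneg_left (by linarith) hXg
  have goal2 : (∑ x, w x * ℓ x) + (E*E - 1) * B1 ≤ -(κ/2) * (E*E) := by
    nlinarith [hA, hB2, hsum_le, hXg]
  have key : E⁻¹ * (∑ x, w x * ℓ x) + (E - E⁻¹) * B1 ≤ -(κ/2) * E := by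
    have expand : E * (E⁻¹ * (∑ x, w x * ℓ x) + (E - E⁻¹) * B1)
        = (E * E⁻¹) * (∑ x, w x * ℓ x) + (E*E - E*E⁻¹) * B1 := by ring
    have h3 : E * (E⁻¹ * (∑ x, w x * ℓ x) + (E - E⁻¹) * B1) ≤ E * (-(κ/2) * E) := by
      rw [expand, hEE]
      calc 1 * (∑ x, w x * ℓ x) + (E*E - 1) * B1
          = (∑ x, w x * ℓ x) + (E*E - 1) * B1 := by ring
        _ ≤ -(κ/2) * (E*E) := goal2
        _ = E * (-(κ/2) * E) := by ring
    exact (mul_le_mul_iff_right₀ hEpos).mp h3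
  have hfinal : -(κ/2) * E ≤ -(κ/2) * ∑ x, w x * Real.exp (s * ℓ x) :=
    mul_le_mul_of_nonpos_left hM (by linarith)
  linarith

variable {L K : ℕ} {𝒳 : Fin K → Type} [∀ m, Fintype (𝒳 m)]

set_option maxHeartbeats 2000000 in
lemma sum_prod_pow' (r : Fin K → ℕ) (G : ∀ m, 𝒳 m → ℝ) :
    ∑ x : Obs 𝒳 r, ∏ m, ∏ t, G m (x m t) = ∏ m, (∑ v : 𝒳 m, G m v) ^ (r m) := by
  classical
  have h1 : ∑ x : Obs 𝒳 r, ∏ m, ∏ t, G m (x m t)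
      = ∏ m, ∑ f : Fin (r m) → 𝒳 m, ∏ t, G m (f t) :=
    sum_pi_prod' (fun m (f : Fin (r m) → 𝒳 m) => ∏ t, G m (f t))
  rw [h1]
  refine Finset.prod_congr rfl (fun m _ => ?_)
  have h2 : ∑ f : Fin (r m) → 𝒳 m, ∏ t, G m (f t) = ∏ _t : Fin (r m), ∑ v, G m v :=
    sum_pi_prod' (fun (_ : Fin (r m)) v => G m v)
  rw [h2, Finset.prod_const, Finset.card_univ, Fintype.card_fin]

/-- Exponential form of the Chernoff factor. -/
def Mf (p : ∀ m : Fin K, 𝒳 m → Fin L → ℝ) (y y' : Fin L) (m : Fin K) (s : ℝ) : ℝ :=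
  ∑ v, p m v y * Real.exp (s * Real.log (p m v y' / p m v y))

/-- Its derivative in `s`. -/
def Nf (p : ∀ m : Fin K, 𝒳 m → Fin L → ℝ) (y y' : Fin L) (m : Fin K) (s : ℝ) : ℝ :=
  ∑ v, p m v y * Real.exp (s * Real.log (p m v y' / p m v y))
    * Real.log (p m v y' / p m v y)

lemma rep_term (p : ∀ m : Fin K, 𝒳 m → Fin L → ℝ)
    (hp : ∀ (m : Fin K) (x : 𝒳 m) (y : Fin L), 0 < p m x y)
    (y y' : Fin L) (m : Fin K) (s : ℝ) (v : 𝒳 m) :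
    p m v y ^ (1 - s) * p m v y' ^ s
      = p m v y * Real.exp (s * Real.log (p m v y' / p m v y)) := by
  have hpy := hp m v y
  have hpy' := hp m v y'
  have hdiv : 0 < p m v y' / p m v y := div_pos hpy' hpy
  have h1 : Real.exp (s * Real.log (p m v y' / p m v y)) = (p m v y' / p m v y) ^ s := by
    rw [Real.rpow_def_of_pos hdiv, mul_comm]
  rw [h1, Real.div_rpow hpy'.le hpy.le, Real.rpow_sub hpy, Real.rpow_one]
  have hps : (0:ℝ) < p m v y ^ s := Real.rpow_pos_of_pos hpy s
  field_simp

lemma chernoffM_eq_Mf (p : ∀ m : Fin K, 𝒳 m → Fin L → ℝ)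
    (hp : ∀ (m : Fin K) (x : 𝒳 m) (y : Fin L), 0 < p m x y)
    (y y' : Fin L) (m : Fin K) (s : ℝ) :
    chernoffM p m y y' s = Mf p y y' m s :=
  Finset.sum_congr rfl (fun v _ => rep_term p hp y y' m s v)

lemma Mf_pos (p : ∀ m : Fin K, 𝒳 m → Fin L → ℝ)
    (hp : ∀ (m : Fin K) (x : 𝒳 m) (y : Fin L), 0 < p m x y)
    (hXne : ∀ m : Fin K, Nonempty (𝒳 m))
    (y y' : Fin L) (m : Fin K) (s : ℝ) : 0 < Mf p y y' m s :=
  Finset.sum_pos (fun v _ => mul_pos (hp m v y) (Real.exp_pos _))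
    (Finset.univ_nonempty_iff.mpr (hXne m))

lemma hasDerivAt_Mf (p : ∀ m : Fin K, 𝒳 m → Fin L → ℝ)
    (y y' : Fin L) (m : Fin K) (s : ℝ) :
    HasDerivAt (fun u => Mf p y y' m u) (Nf p y y' m s) s := by
  have h : HasDerivAt (fun u => Mf p y y' m u)
      (∑ v, p m v y * (Real.exp (s * Real.log (p m v y' / p m v y))
        * Real.log (p m v y' / p m v y))) s := by
    apply HasDerivAt.fun_sum
    intro v _
    exact ((hasDerivAt_mul_const (Real.log (p m v y' / p m v y))).exp).const_mul _
  have heq : (∑ v, p m v y * (Real.exp (s * Real.log (p m v y' / p m v y))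
        * Real.log (p m v y' / p m v y))) = Nf p y y' m s := by
    simp only [Nf]
    exact Finset.sum_congr rfl (fun v _ => by ring)
  rwa [heq] at h

/-- The derivative function of `s ↦ log (proxy π p r y y' s)`. -/
def hfun (π : Fin L → ℝ) (p : ∀ m : Fin K, 𝒳 m → Fin L → ℝ) (r : Fin K → ℕ)
    (y y' : Fin L) (s : ℝ) : ℝ :=
  Real.log (π y' / π y) + ∑ m, (r m : ℝ) * (Nf p y y' m s / Mf p y y' m s)

lemma log_proxy_eq (π : Fin L → ℝ) (p : ∀ m : Fin K, 𝒳 m → Fin L → ℝ)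
    (hπ : ∀ y, 0 < π y)
    (hp : ∀ (m : Fin K) (x : 𝒳 m) (y : Fin L), 0 < p m x y)
    (hXne : ∀ m : Fin K, Nonempty (𝒳 m))
    (r : Fin K → ℕ) (y y' : Fin L) (s : ℝ) :
    Real.log (proxy π p r y y' s)
      = s * Real.log (π y' / π y) + ∑ m, (r m : ℝ) * Real.log (Mf p y y' m s) := by
  have hdiv : 0 < π y' / π y := div_pos (hπ y') (hπ y)
  have hMpos : ∀ m : Fin K, 0 < Mf p y y' m s := fun m => Mf_pos p hp hXne y y' m s
  have hfac : ∀ m : Fin K, (0:ℝ) < chernoffM p m y y' s ^ (r m) := by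
    intro m
    rw [chernoffM_eq_Mf p hp]
    exact pow_pos (hMpos m) _
  rw [proxy, Real.log_mul (ne_of_gt (Real.rpow_pos_of_pos hdiv s))
      (ne_of_gt (Finset.prod_pos (fun m _ => hfac m))),
    Real.log_rpow hdiv, Real.log_prod (fun m _ => ne_of_gt (hfac m))]
  congr 1
  refine Finset.sum_congr rfl (fun m _ => ?_)
  rw [chernoffM_eq_Mf p hp, Real.log_pow]

lemma hasDerivAt_log_proxy (π : Fin L → ℝ) (p : ∀ m : Fin K, 𝒳 m → Fin L → ℝ)
    (hπ : ∀ y, 0 < π y)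
    (hp : ∀ (m : Fin K) (x : 𝒳 m) (y : Fin L), 0 < p m x y)
    (hXne : ∀ m : Fin K, Nonempty (𝒳 m))
    (r : Fin K → ℕ) (y y' : Fin L) (s : ℝ) :
    HasDerivAt (fun u => Real.log (proxy π p r y y' u)) (hfun π p r y y' s) s := by
  have H : HasDerivAt
      (fun u => u * Real.log (π y' / π y) + ∑ m, (r m : ℝ) * Real.log (Mf p y y' m u))
      (Real.log (π y' / π y) + ∑ m, (r m : ℝ) * (Nf p y y' m s / Mf p y y' m s)) s := by
    apply (hasDerivAt_mul_const _).add
    apply HasDerivAt.fun_sum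
    intro m _
    exact ((hasDerivAt_Mf p y y' m s).log (ne_of_gt (Mf_pos p hp hXne y y' m s))).const_mul _
  have heq : (fun u => Real.log (proxy π p r y y' u))
      = (fun u => u * Real.log (π y' / π y) + ∑ m, (r m : ℝ) * Real.log (Mf p y y' m u)) :=
    funext (fun u => log_proxy_eq π p hπ hp hXne r y y' u)
  rw [hfun, heq]
  exact H

lemma proxy_pos (π : Fin L → ℝ) (p : ∀ m : Fin K, 𝒳 m → Fin L → ℝ)
    (hπ : ∀ y, 0 < π y)
    (hp : ∀ (m : Fin K) (x : 𝒳 m) (y : Fin L), 0 < p m x y)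
    (hXne : ∀ m : Fin K, Nonempty (𝒳 m))
    (r : Fin K → ℕ) (y y' : Fin L) (s : ℝ) : 0 < proxy π p r y y' s := by
  apply mul_pos (Real.rpow_pos_of_pos (div_pos (hπ y') (hπ y)) s)
  apply Finset.prod_pos
  intro m _
  rw [chernoffM_eq_Mf p hp]
  exact pow_pos (Mf_pos p hp hXne y y' m s) _

/-- The per-observation representation of the integrand. -/
lemma per_x (π : Fin L → ℝ) (p : ∀ m : Fin K, 𝒳 m → Fin L → ℝ)
    (hπ : ∀ y, 0 < π y)
    (hp : ∀ (m : Fin K) (x : 𝒳 m) (y : Fin L), 0 < p m x y)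
    (r : Fin K → ℕ) (y y' : Fin L) (s : ℝ) (x : Obs 𝒳 r) :
    (π y' / π y) ^ s
      * ∏ m, ∏ t, (p m (x m t) y
          * Real.exp (s * Real.log (p m (x m t) y' / p m (x m t) y)))
      = prodLik p r y x * Real.exp (s * LLdiff π p r y y' x) := by
  have hdiv : 0 < π y' / π y := div_pos (hπ y') (hπ y)
  have h1 : ∀ m : Fin K, ∏ t, (p m (x m t) y
      * Real.exp (s * Real.log (p m (x m t) y' / p m (x m t) y)))
      = (∏ t, p m (x m t) y)
        * ∏ t, Real.exp (s * Real.log (p m (x m t) y' / p m (x m t) y)) :=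
    fun m => Finset.prod_mul_distrib
  calc (π y' / π y) ^ s
      * ∏ m, ∏ t, (p m (x m t) y
          * Real.exp (s * Real.log (p m (x m t) y' / p m (x m t) y)))
      = (π y' / π y) ^ s * ((∏ m, ∏ t, p m (x m t) y)
          * ∏ m, ∏ t, Real.exp (s * Real.log (p m (x m t) y' / p m (x m t) y))) := by
        rw [← Finset.prod_mul_distrib]
        congr 1
        exact Finset.prod_congr rfl (fun m _ => h1 m)
    _ = prodLik p r y x * ((π y' / π y) ^ s
          * ∏ m, ∏ t, Real.exp (s * Real.log (p m (x m t) y' / p m (x m t) y))) := by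
        rw [prodLik]; ring
    _ = prodLik p r y x * Real.exp (s * LLdiff π p r y y' x) := by
        congr 1
        have h2 : ∀ m : Fin K,
            (∏ t, Real.exp (s * Real.log (p m (x m t) y' / p m (x m t) y)))
            = Real.exp (∑ t, s * Real.log (p m (x m t) y' / p m (x m t) y)) :=
          fun m => (Real.exp_sum _ _).symm
        rw [Real.rpow_def_of_pos hdiv]
        calc Real.exp (Real.log (π y' / π y) * s)
            * ∏ m, ∏ t, Real.exp (s * Real.log (p m (x m t) y' / p m (x m t) y))
            = Real.exp (Real.log (π y' / π y) * s)
              * ∏ m, Real.exp (∑ t, s * Real.log (p m (x m t) y' / p m (x m t) y)) := by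
              congr 1
              exact Finset.prod_congr rfl (fun m _ => h2 m)
          _ = Real.exp (Real.log (π y' / π y) * s)
              * Real.exp (∑ m, ∑ t, s * Real.log (p m (x m t) y' / p m (x m t) y)) := by
              rw [Real.exp_sum]
          _ = Real.exp (s * LLdiff π p r y y' x) := by
              rw [← Real.exp_add, LLdiff]
              congr 1
              rw [mul_add]
              congr 1
              · ring
              · rw [Finset.mul_sum]
                refine Finset.sum_congr rfl (fun m _ => ?_)
                rw [Finset.mul_sum]

/-- Representation of the proxy as an exponential sum. -/
lemma proxy_rep (π : Fin L → ℝ) (p : ∀ m : Fin K, 𝒳 m → Fin L → ℝ)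
    (hπ : ∀ y, 0 < π y)
    (hp : ∀ (m : Fin K) (x : 𝒳 m) (y : Fin L), 0 < p m x y)
    (r : Fin K → ℕ) (y y' : Fin L) (s : ℝ) :
    proxy π p r y y' s
      = ∑ x : Obs 𝒳 r, prodLik p r y x * Real.exp (s * LLdiff π p r y y' x) := by
  have hrep : ∏ m, chernoffM p m y y' s ^ (r m)
      = ∑ x : Obs 𝒳 r, ∏ m, ∏ t, (p m (x m t) y
          * Real.exp (s * Real.log (p m (x m t) y' / p m (x m t) y))) := by
    rw [sum_prod_pow' r (fun m v => p m v y
      * Real.exp (s * Real.log (p m v y' / p m v y)))]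
    exact Finset.prod_congr rfl (fun m _ => by rw [chernoffM_eq_Mf p hp, Mf])
  rw [proxy, hrep, Finset.mul_sum]
  exact Finset.sum_congr rfl (fun x _ => per_x π p hπ hp r y y' s x)

/-- The tilted weight times the proxy equals the exponentially tilted likelihood. -/
lemma Qweight_mul_proxy (π : Fin L → ℝ) (p : ∀ m : Fin K, 𝒳 m → Fin L → ℝ)
    (hπ : ∀ y, 0 < π y)
    (hp : ∀ (m : Fin K) (x : 𝒳 m) (y : Fin L), 0 < p m x y)
    (hXne : ∀ m : Fin K, Nonempty (𝒳 m))
    (r : Fin K → ℕ) (y y' : Fin L) (s : ℝ) (x : Obs 𝒳 r) :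
    Qweight p r y y' s x * proxy π p r y y' s
      = prodLik p r y x * Real.exp (s * LLdiff π p r y y' x) := by
  have hMpos : ∀ m : Fin K, 0 < Mf p y y' m s := fun m => Mf_pos p hp hXne y y' m s
  have hq : Qweight p r y y' s x
      = (∏ m, ∏ t, (p m (x m t) y
          * Real.exp (s * Real.log (p m (x m t) y' / p m (x m t) y))))
        / ∏ m, Mf p y y' m s ^ (r m) := by
    rw [Qweight]
    have h1 : ∀ m : Fin K, ∏ t, qTilt p m y y' s (x m t)
        = (∏ t, (p m (x m t) y
            * Real.exp (s * Real.log (p m (x m t) y' / p m (x m t) y))))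
          / Mf p y y' m s ^ (r m) := by
      intro m
      have h2 : ∀ t : Fin (r m), qTilt p m y y' s (x m t)
          = (p m (x m t) y
              * Real.exp (s * Real.log (p m (x m t) y' / p m (x m t) y)))
            / Mf p y y' m s := by
        intro t
        rw [qTilt, rep_term p hp, chernoffM_eq_Mf p hp]
      rw [Finset.prod_congr rfl (fun t _ => h2 t), Finset.prod_div_distrib,
        Finset.prod_const, Finset.card_univ, Fintype.card_fin]
    rw [Finset.prod_congr rfl (fun m _ => h1 m), Finset.prod_div_distrib]
  have hprodM : (0:ℝ) < ∏ m, Mf p y y' m s ^ (r m) :=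
    Finset.prod_pos (fun m _ => pow_pos (hMpos m) _)
  have hproxy : proxy π p r y y' s
      = (π y' / π y) ^ s * ∏ m, Mf p y y' m s ^ (r m) := by
    rw [proxy]
    congr 1
    exact Finset.prod_congr rfl (fun m _ => by rw [chernoffM_eq_Mf p hp])
  rw [hq, hproxy, ← per_x π p hπ hp r y y' s x]
  field_simp

set_option maxHeartbeats 2000000 in
/-- Main per-pair lemma. -/
lemma key_pair (π : Fin L → ℝ) (p : ∀ m : Fin K, 𝒳 m → Fin L → ℝ)
    (hπ : ∀ y, 0 < π y)
    (hp : ∀ (m : Fin K) (x : 𝒳 m) (y : Fin L), 0 < p m x y)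
    (hp1 : ∀ (m : Fin K) (y : Fin L), ∑ x : 𝒳 m, p m x y = 1)
    (hXne : ∀ m : Fin K, Nonempty (𝒳 m))
    (y y' : Fin L) (r : Fin K → ℕ)
    (B1 κ δ A : ℝ) (hB1 : 1 ≤ B1)
    (hBle : ∀ (m : Fin K) (x : 𝒳 m), |Real.log (p m x y' / p m x y)| ≤ B1)
    (hκ : 0 < κ)
    (hκD0 : ∀ m : Fin K, (fun x => p m x y) ≠ (fun x => p m x y') →
      κ ≤ -∑ x, p m x y * Real.log (p m x y' / p m x y))
    (hκD1 : ∀ m : Fin K, (fun x => p m x y) ≠ (fun x => p m x y') →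
      κ ≤ ∑ x, p m x y' * Real.log (p m x y' / p m x y))
    (hδ0 : 0 < δ) (hδ14 : δ ≤ 1/4)
    (hsmall : ∀ s : ℝ, 0 ≤ s → s ≤ δ → (Real.exp (2*s*B1) - 1) * (B1 + κ) ≤ κ/2)
    (hA : |Real.log (π y' / π y)| ≤ A)
    (hn : A + 1 ≤ (effSample p r y y' : ℝ) * (κ/2)) :
    ∀ sstar ∈ Set.Icc (0:ℝ) 1,
      IsMinOn (fun s => Real.log (proxy π p r y y' s)) (Set.Icc (0:ℝ) 1) sstar →
      sstar ∈ Set.Icc δ (1-δ) ∧ Qexp p r y y' sstar (LLdiff π p r y y') = 0 := by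
  classical
  intro sstar hsmem hmin
  set g : ℝ → ℝ := fun s => Real.log (proxy π p r y y' s) with hg
  have hgder : ∀ s : ℝ, HasDerivAt g (hfun π p r y y' s) s :=
    fun s => hasDerivAt_log_proxy π p hπ hp hXne r y y' s
  have hMpos : ∀ (m : Fin K) (s : ℝ), 0 < Mf p y y' m s :=
    fun m s => Mf_pos p hp hXne y y' m s
  -- ratio bounds
  have hφneg : ∀ s : ℝ, 0 ≤ s → s ≤ δ → ∀ m : Fin K,
      (fun x => p m x y) ≠ (fun x => p m x y') →
      Nf p y y' m s / Mf p y y' m s ≤ -(κ/2) := by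
    intro s hs0 hsδ m hm
    have key := phi_le' (fun v => p m v y) (fun v => Real.log (p m v y' / p m v y))
      B1 κ s (fun v => (hp m v y).le) (hp1 m y) (fun v => hBle m v)
      (by linarith) hκ (hκD0 m hm) hs0 (hsmall s hs0 hsδ)
    rw [div_le_iff₀ (hMpos m s)]
    calc Nf p y y' m s ≤ -(κ/2) * ∑ v, p m v y
          * Real.exp (s * Real.log (p m v y' / p m v y)) := key
      _ = -(κ/2) * Mf p y y' m s := by simp only [Mf]
  have hφpos : ∀ s : ℝ, 1 - δ ≤ s → s ≤ 1 → ∀ m : Fin K,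
      (fun x => p m x y) ≠ (fun x => p m x y') →
      κ/2 ≤ Nf p y y' m s / Mf p y y' m s := by
    intro s hs1 hs2 m hm
    have hconv : ∀ v : 𝒳 m, p m v y'
        * Real.exp ((1-s) * -Real.log (p m v y' / p m v y))
        = p m v y * Real.exp (s * Real.log (p m v y' / p m v y)) := by
      intro v
      have hpv : p m v y' = p m v y
          * Real.exp (Real.log (p m v y' / p m v y)) := by
        rw [Real.exp_log (div_pos (hp m v y') (hp m v y))]
        rw [mul_comm, div_mul_eq_mul_div, mul_div_assoc, div_self (hp m v y).ne',
          mul_one]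
      nth_rewrite 1 [hpv]
      rw [mul_assoc, ← Real.exp_add]
      congr 2
      ring
    have hD1' : κ ≤ -∑ v, p m v y' * -Real.log (p m v y' / p m v y) := by
      have := hκD1 m hm
      rw [← Finset.sum_neg_distrib]
      simpa using this
    have hb' : ∀ v : 𝒳 m, |-Real.log (p m v y' / p m v y)| ≤ B1 := by
      intro v; rw [abs_neg]; exact hBle m v
    have key := phi_le' (fun v => p m v y') (fun v => -Real.log (p m v y' / p m v y))
      B1 κ (1-s) (fun v => (hp m v y').le) (hp1 m y') hb'
      (by linarith) hκ hD1' (by linarith) (hsmall (1-s) (by linarith) (by linarith))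
    -- rewrite both sides of key
    have keyN : ∑ v, p m v y' * Real.exp ((1-s) * -Real.log (p m v y' / p m v y))
        * -Real.log (p m v y' / p m v y) = -Nf p y y' m s := by
      simp only [Nf]
      rw [← Finset.sum_neg_distrib]
      refine Finset.sum_congr rfl (fun v _ => ?_)
      rw [hconv v]; ring
    have keyM : ∑ v, p m v y' * Real.exp ((1-s) * -Real.log (p m v y' / p m v y))
        = Mf p y y' m s := by
      simp only [Mf]
      exact Finset.sum_congr rfl (fun v _ => hconv v)
    rw [keyN, keyM] at key
    rw [le_div_iff₀ (hMpos m s)]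
    linarith
  have hNf_zero : ∀ (s : ℝ) (m : Fin K),
      ¬((fun x => p m x y) ≠ (fun x => p m x y')) → Nf p y y' m s = 0 := by
    intro s m hm
    rw [not_not] at hm
    simp only [Nf]
    apply Finset.sum_eq_zero
    intro v _
    have : p m v y' = p m v y := (congrFun hm v).symm
    rw [this, div_self (hp m v y).ne', Real.log_one]
    ring
  -- bounds on hfun on the two boundary strips
  have habs : |Real.log (π y' / π y)| ≤ A := hA
  have hsum_split : ∀ s : ℝ, (∀ m ∈ Finset.univ.filter
        (fun m => (fun x => p m x y) ≠ (fun x => p m x y')),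
        (r m : ℝ) * (Nf p y y' m s / Mf p y y' m s) ≤ (r m : ℝ) * (-(κ/2))) →
      ∑ m, (r m : ℝ) * (Nf p y y' m s / Mf p y y' m s)
        ≤ -(effSample p r y y' : ℝ) * (κ/2) := by
    intro s hbd
    rw [← Finset.sum_filter_add_sum_filter_not Finset.univ
      (fun m => (fun x => p m x y) ≠ (fun x => p m x y'))
      (fun m => (r m : ℝ) * (Nf p y y' m s / Mf p y y' m s))]
    have h2 : ∑ m ∈ Finset.univ.filter
        (fun m => ¬((fun x => p m x y) ≠ (fun x => p m x y'))),
        (r m : ℝ) * (Nf p y y' m s / Mf p y y' m s) = 0 := by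
      apply Finset.sum_eq_zero
      intro m hm
      rw [hNf_zero s m (Finset.mem_filter.mp hm).2, zero_div, mul_zero]
    rw [h2, add_zero]
    calc ∑ m ∈ Finset.univ.filter
          (fun m => (fun x => p m x y) ≠ (fun x => p m x y')),
          (r m : ℝ) * (Nf p y y' m s / Mf p y y' m s)
        ≤ ∑ m ∈ Finset.univ.filter
          (fun m => (fun x => p m x y) ≠ (fun x => p m x y')),
          (r m : ℝ) * (-(κ/2)) := Finset.sum_le_sum hbd
      _ = -(effSample p r y y' : ℝ) * (κ/2) := by
          rw [← Finset.sum_mul, effSample, Nat.cast_sum]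
          ring
  have hneg : ∀ s : ℝ, 0 ≤ s → s ≤ δ → hfun π p r y y' s < 0 := by
    intro s hs0 hsδ
    have hsum := hsum_split s (fun m hm => by
      have := hφneg s hs0 hsδ m (Finset.mem_filter.mp hm).2
      exact mul_le_mul_of_nonneg_left this (Nat.cast_nonneg _))
    have h1 : Real.log (π y' / π y) ≤ A := le_trans (le_abs_self _) habs
    rw [hfun]
    nlinarith [hn]
  have hpos : ∀ s : ℝ, 1 - δ ≤ s → s ≤ 1 → 0 < hfun π p r y y' s := by
    intro s hs1 hs2
    have hsum : (effSample p r y y' : ℝ) * (κ/2)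
        ≤ ∑ m, (r m : ℝ) * (Nf p y y' m s / Mf p y y' m s) := by
      rw [← Finset.sum_filter_add_sum_filter_not Finset.univ
        (fun m => (fun x => p m x y) ≠ (fun x => p m x y'))
        (fun m => (r m : ℝ) * (Nf p y y' m s / Mf p y y' m s))]
      have h2 : ∑ m ∈ Finset.univ.filter
          (fun m => ¬((fun x => p m x y) ≠ (fun x => p m x y'))),
          (r m : ℝ) * (Nf p y y' m s / Mf p y y' m s) = 0 := by
        apply Finset.sum_eq_zero
        intro m hm
        rw [hNf_zero s m (Finset.mem_filter.mp hm).2, zero_div, mul_zero]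
      rw [h2, add_zero]
      calc (effSample p r y y' : ℝ) * (κ/2)
          = ∑ m ∈ Finset.univ.filter
            (fun m => (fun x => p m x y) ≠ (fun x => p m x y')),
            (r m : ℝ) * (κ/2) := by
            rw [← Finset.sum_mul, effSample, Nat.cast_sum]
        _ ≤ ∑ m ∈ Finset.univ.filter
            (fun m => (fun x => p m x y) ≠ (fun x => p m x y')),
            (r m : ℝ) * (Nf p y y' m s / Mf p y y' m s) := by
            apply Finset.sum_le_sum
            intro m hm
            exact mul_le_mul_of_nonneg_left
              (hφpos s hs1 hs2 m (Finset.mem_filter.mp hm).2) (Nat.cast_nonneg _)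
    have h1 : -A ≤ Real.log (π y' / π y) := by
      have := neg_abs_le (Real.log (π y' / π y))
      linarith [habs]
    rw [hfun]
    nlinarith [hn]
  -- monotonicity on boundary strips
  have hgdiff : Differentiable ℝ g := fun s => (hgder s).differentiableAt
  have hanti : StrictAntiOn g (Set.Icc 0 δ) := by
    apply strictAntiOn_of_deriv_neg (convex_Icc 0 δ) hgdiff.continuous.continuousOn
    intro x hx
    rw [interior_Icc] at hx
    rw [(hgder x).deriv]
    exact hneg x hx.1.le hx.2.le
  have hmono : StrictMonoOn g (Set.Icc (1-δ) 1) := by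
    apply strictMonoOn_of_deriv_pos (convex_Icc (1-δ) 1) hgdiff.continuous.continuousOn
    intro x hx
    rw [interior_Icc] at hx
    rw [(hgder x).deriv]
    exact hpos x hx.1.le hx.2.le
  have hδIcc : δ ∈ Set.Icc (0:ℝ) 1 := ⟨hδ0.le, by linarith⟩
  have h1δIcc : (1-δ) ∈ Set.Icc (0:ℝ) 1 := ⟨by linarith, by linarith⟩
  have hs1 : δ ≤ sstar := by
    by_contra hlt
    push_neg at hlt
    have h1 : g δ < g sstar := hanti ⟨hsmem.1, hlt.le⟩ ⟨hδ0.le, le_refl δ⟩ hlt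
    have h2 : g sstar ≤ g δ := isMinOn_iff.mp hmin δ hδIcc
    linarith
  have hs2 : sstar ≤ 1 - δ := by
    by_contra hlt
    push_neg at hlt
    have h1 : g (1-δ) < g sstar :=
      hmono ⟨le_refl _, by linarith⟩ ⟨hlt.le, hsmem.2⟩ hlt
    have h2 : g sstar ≤ g (1-δ) := isMinOn_iff.mp hmin (1-δ) h1δIcc
    linarith
  refine ⟨⟨hs1, hs2⟩, ?_⟩
  -- interior stationarity
  have hs0' : 0 < sstar := lt_of_lt_of_le hδ0 hs1
  have hs1' : sstar < 1 := lt_of_le_of_lt hs2 (by linarith)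
  have hloc : IsLocalMin g sstar := hmin.isLocalMin (Icc_mem_nhds hs0' hs1')
  have hzero : hfun π p r y y' sstar = 0 :=
    hloc.hasDerivAt_eq_zero (hgder sstar)
  -- derivative of the proxy itself, two ways
  have hproxypos : ∀ u : ℝ, 0 < proxy π p r y y' u :=
    fun u => proxy_pos π p hπ hp hXne r y y' u
  have hDer1 : HasDerivAt (fun u => proxy π p r y y' u)
      (proxy π p r y y' sstar * hfun π p r y y' sstar) sstar := by
    have heq : (fun u => proxy π p r y y' u) = (fun u => Real.exp (g u)) :=
      funext (fun u => (Real.exp_log (hproxypos u)).symm)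
    rw [heq]
    have h := (hgder sstar).exp
    have hval : Real.exp (g sstar) = proxy π p r y y' sstar :=
      Real.exp_log (hproxypos sstar)
    rwa [hval] at h
  have hDer2 : HasDerivAt (fun u => proxy π p r y y' u)
      (∑ x : Obs 𝒳 r, prodLik p r y x
        * Real.exp (sstar * LLdiff π p r y y' x) * LLdiff π p r y y' x) sstar := by
    have heq : (fun u => proxy π p r y y' u)
        = (fun u => ∑ x : Obs 𝒳 r, prodLik p r y x
            * Real.exp (u * LLdiff π p r y y' x)) :=
      funext (fun u => proxy_rep π p hπ hp r y y' u)
    rw [heq]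
    have H : HasDerivAt (fun u => ∑ x : Obs 𝒳 r, prodLik p r y x
        * Real.exp (u * LLdiff π p r y y' x))
        (∑ x : Obs 𝒳 r, prodLik p r y x
          * (Real.exp (sstar * LLdiff π p r y y' x) * LLdiff π p r y y' x)) sstar := by
      apply HasDerivAt.fun_sum
      intro x _
      exact ((hasDerivAt_mul_const (LLdiff π p r y y' x)).exp).const_mul _
    have heq2 : (∑ x : Obs 𝒳 r, prodLik p r y x
        * (Real.exp (sstar * LLdiff π p r y y' x) * LLdiff π p r y y' x))
        = ∑ x : Obs 𝒳 r, prodLik p r y x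
          * Real.exp (sstar * LLdiff π p r y y' x) * LLdiff π p r y y' x :=
      Finset.sum_congr rfl (fun x _ => by ring)
    rwa [heq2] at H
  have hDD : ∑ x : Obs 𝒳 r, prodLik p r y x
      * Real.exp (sstar * LLdiff π p r y y' x) * LLdiff π p r y y' x
      = proxy π p r y y' sstar * hfun π p r y y' sstar := hDer2.unique hDer1
  -- compute the expectation
  have hPne : proxy π p r y y' sstar ≠ 0 := (hproxypos sstar).ne'
  have hQw : ∀ x : Obs 𝒳 r, Qweight p r y y' sstar x
      = prodLik p r y x * Real.exp (sstar * LLdiff π p r y y' x)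
        / proxy π p r y y' sstar := by
    intro x
    rw [eq_div_iff hPne]
    exact Qweight_mul_proxy π p hπ hp hXne r y y' sstar x
  rw [Qexp]
  calc ∑ x : Obs 𝒳 r, Qweight p r y y' sstar x * LLdiff π p r y y' x
      = ∑ x : Obs 𝒳 r, prodLik p r y x
          * Real.exp (sstar * LLdiff π p r y y' x) * LLdiff π p r y y' x
          / proxy π p r y y' sstar := by
        refine Finset.sum_congr rfl (fun x _ => ?_)
        rw [hQw x]
        ring
    _ = (∑ x : Obs 𝒳 r, prodLik p r y x
          * Real.exp (sstar * LLdiff π p r y y' x) * LLdiff π p r y y' x)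
          / proxy π p r y y' sstar := by rw [Finset.sum_div]
    _ = (proxy π p r y y' sstar * hfun π p r y y' sstar) / proxy π p r y y' sstar := by
          rw [hDD]
    _ = hfun π p r y y' sstar := mul_div_cancel_left₀ _ hPne
    _ = 0 := hzero


set_option maxHeartbeats 2000000 in
theorem interior_minimizers
    (hL : 2 ≤ L)
    (π : Fin L → ℝ) (p : ∀ m : Fin K, 𝒳 m → Fin L → ℝ)
    (hπ : ∀ y, 0 < π y) (hπ1 : ∑ y, π y = 1)
    (hp : ∀ (m : Fin K) (x : 𝒳 m) (y : Fin L), 0 < p m x y)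
    (hp1 : ∀ (m : Fin K) (y : Fin L), ∑ x : 𝒳 m, p m x y = 1)
    (hident : ∀ y y' : Fin L, y ≠ y' → ∃ m, (fun x => p m x y) ≠ (fun x => p m x y'))
    (B : ℝ)
    (hB : ∀ (m : Fin K) (y y' : Fin L), y ≠ y' →
      ∀ x : 𝒳 m, |Real.log (p m x y' / p m x y)| ≤ B) :
    ∃ δ ∈ Set.Ioo (0 : ℝ) (1/2), ∃ ncen : ℕ,
      ∀ y y' : Fin L, y ≠ y' → ∀ r : Fin K → ℕ, ncen ≤ effSample p r y y' →
        ∀ sstar ∈ Set.Icc (0 : ℝ) 1,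
          IsMinOn (fun s => Real.log (proxy π p r y y' s)) (Set.Icc (0 : ℝ) 1) sstar →
          sstar ∈ Set.Icc δ (1 - δ) ∧
            Qexp p r y y' sstar (LLdiff π p r y y') = 0 := by
  classical
  have hL0 : 0 < L := by omega
  have hL1 : 1 < L := by omega
  set y0 : Fin L := ⟨0, hL0⟩ with hy0def
  set y1 : Fin L := ⟨1, hL1⟩ with hy1def
  have hy01 : y0 ≠ y1 := by
    intro h
    have := congrArg Fin.val h
    simp [hy0def, hy1def] at this
  have hXne : ∀ m : Fin K, Nonempty (𝒳 m) := by
    intro m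
    by_contra h
    rw [not_nonempty_iff] at h
    have h1 := hp1 m y0
    rw [Finset.univ_eq_empty, Finset.sum_empty] at h1
    exact one_ne_zero h1.symm
  obtain ⟨m0, -⟩ := hident y0 y1 hy01
  -- the uniform log-likelihood bound
  set B1 : ℝ := |B| + 1 with hB1def
  have hB1 : 1 ≤ B1 := by
    have := abs_nonneg B
    rw [hB1def]; linarith
  have hBle : ∀ (m : Fin K) (y y' : Fin L), y ≠ y' → ∀ x : 𝒳 m,
      |Real.log (p m x y' / p m x y)| ≤ B1 := by
    intro m y y' hyy x
    have h1 := hB m y y' hyy x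
    have h2 := le_abs_self B
    have h3 := abs_nonneg B
    rw [hB1def]; linarith
  -- the uniform pairwise divergence bound κ
  obtain ⟨κ, hκpos, hκ1, hκD⟩ : ∃ κ : ℝ, 0 < κ ∧ κ ≤ 1 ∧
      ∀ (y y' : Fin L) (m : Fin K), y ≠ y' →
        (fun x => p m x y) ≠ (fun x => p m x y') →
        κ ≤ -∑ x, p m x y * Real.log (p m x y' / p m x y) ∧
        κ ≤ ∑ x, p m x y' * Real.log (p m x y' / p m x y) := by
    have hD0pos : ∀ (y y' : Fin L) (m : Fin K),
        (fun x => p m x y) ≠ (fun x => p m x y') →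
        0 < -∑ x, p m x y * Real.log (p m x y' / p m x y) := by
      intro y y' m hm
      have hg := gibbs' (fun x => p m x y) (fun x => p m x y')
        (fun x => hp m x y) (fun x => hp m x y') (by rw [hp1, hp1]) hm
      linarith
    have hD1pos : ∀ (y y' : Fin L) (m : Fin K),
        (fun x => p m x y) ≠ (fun x => p m x y') →
        0 < ∑ x, p m x y' * Real.log (p m x y' / p m x y) := by
      intro y y' m hm
      have hg := gibbs' (fun x => p m x y') (fun x => p m x y)
        (fun x => hp m x y') (fun x => hp m x y) (by rw [hp1, hp1]) (Ne.symm hm)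
      have heq : ∑ x, p m x y' * Real.log (p m x y / p m x y')
          = -∑ x, p m x y' * Real.log (p m x y' / p m x y) := by
        rw [← Finset.sum_neg_distrib]
        refine Finset.sum_congr rfl (fun x _ => ?_)
        rw [Real.log_div (hp m x y).ne' (hp m x y').ne',
          Real.log_div (hp m x y').ne' (hp m x y).ne']
        ring
      rw [heq] at hg
      linarith
    have hNe : (Finset.univ : Finset (Fin L × Fin L × Fin K)).Nonempty :=
      ⟨(y0, y1, m0), Finset.mem_univ _⟩
    set F : Fin L × Fin L × Fin K → ℝ := fun z =>
      if z.1 ≠ z.2.1 ∧ (fun x => p z.2.2 x z.1) ≠ (fun x => p z.2.2 x z.2.1)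
      then min (-∑ x, p z.2.2 x z.1 * Real.log (p z.2.2 x z.2.1 / p z.2.2 x z.1))
        (∑ x, p z.2.2 x z.2.1 * Real.log (p z.2.2 x z.2.1 / p z.2.2 x z.1))
      else 1 with hFdef
    refine ⟨min (Finset.univ.inf' hNe F) 1, ?_, min_le_right _ _, ?_⟩
    · apply lt_min _ one_pos
      rw [Finset.lt_inf'_iff]
      intro z _
      simp only [hFdef]
      split_ifs with h
      · exact lt_min (hD0pos _ _ _ h.2) (hD1pos _ _ _ h.2)
      · exact one_pos
    · intro y y' m hyy hm
      have h0 : min (Finset.univ.inf' hNe F) 1 ≤ Finset.univ.inf' hNe F :=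
        min_le_left _ _
      have h1 : Finset.univ.inf' hNe F ≤ F (y, y', m) :=
        Finset.inf'_le F (Finset.mem_univ _)
      have h2 : F (y, y', m)
          = min (-∑ x, p m x y * Real.log (p m x y' / p m x y))
            (∑ x, p m x y' * Real.log (p m x y' / p m x y)) := by
        simp only [hFdef]
        exact if_pos ⟨hyy, hm⟩
      rw [h2] at h1
      exact ⟨le_trans (le_trans h0 h1) (min_le_left _ _),
        le_trans (le_trans h0 h1) (min_le_right _ _)⟩
  -- the boundary-strip width δ
  obtain ⟨δ, hδ0, hδ14, hsmall⟩ : ∃ δ : ℝ, 0 < δ ∧ δ ≤ 1/4 ∧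
      ∀ s : ℝ, 0 ≤ s → s ≤ δ → (Real.exp (2*s*B1) - 1) * (B1 + κ) ≤ κ/2 := by
    set E2B : ℝ := Real.exp (2*B1) with hE2Bdef
    have hE2Bpos : (0:ℝ) < E2B := Real.exp_pos _
    have hE2B1 : (1:ℝ) ≤ E2B := Real.one_le_exp (by linarith)
    have hVpos : (0:ℝ) < 16*(B1+1)^2*E2B := by nlinarith
    refine ⟨min (1/4) (κ / (16*(B1+1)^2*E2B)),
      lt_min (by norm_num) (div_pos hκpos hVpos), min_le_left _ _, ?_⟩
    intro s hs0 hsδ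
    set δ' : ℝ := min (1/4) (κ / (16*(B1+1)^2*E2B)) with hδ'def
    have hδ'0 : 0 < δ' := lt_min (by norm_num) (div_pos hκpos hVpos)
    have hδ'14 : δ' ≤ 1/4 := min_le_left _ _
    have hδV : δ' * (16*(B1+1)^2*E2B) ≤ κ := by
      have h1 : δ' ≤ κ / (16*(B1+1)^2*E2B) := min_le_right _ _
      exact (le_div_iff₀ hVpos).mp h1
    have ht0 : 0 ≤ 2*s*B1 := by nlinarith
    have htle : 2*s*B1 ≤ 2*δ'*B1 := by nlinarith
    have h1 : Real.exp (2*s*B1) - 1 ≤ (2*s*B1) * Real.exp (2*s*B1) := exp_sub_one_le' _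
    have h2 : Real.exp (2*s*B1) ≤ E2B := by
      rw [hE2Bdef]
      apply Real.exp_le_exp.mpr
      nlinarith
    have key1 : Real.exp (2*s*B1) - 1 ≤ 2*δ'*B1*E2B := by
      nlinarith [Real.exp_pos (2*s*B1)]
    have hBκ : (0:ℝ) < B1 + κ := by linarith
    have c1 : 2*B1*(B1+κ) ≤ 8*(B1+1)^2 := by nlinarith
    have c2 : (Real.exp (2*s*B1) - 1) * (B1+κ) ≤ 2*δ'*B1*E2B*(B1+κ) :=
      mul_le_mul_of_nonneg_right key1 hBκ.le
    have c3 : 2*δ'*B1*E2B*(B1+κ) ≤ 8*(B1+1)^2*δ'*E2B := by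
      nlinarith [mul_nonneg (mul_nonneg hδ'0.le hE2Bpos.le) hBκ.le]
    have c4 : 8*(B1+1)^2*δ'*E2B = δ'*(16*(B1+1)^2*E2B)/2 := by ring
    nlinarith [c2, c3, c4, hδV]
  -- the prior log-ratio bound A
  have hLne : (Finset.univ : Finset (Fin L)).Nonempty := ⟨y0, Finset.mem_univ _⟩
  set A : ℝ := 2 * Finset.univ.sup' hLne (fun y => |Real.log (π y)|) with hAdef
  have hA : ∀ y y' : Fin L, |Real.log (π y' / π y)| ≤ A := by
    intro y y'
    rw [Real.log_div (hπ y').ne' (hπ y).ne']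
    calc |Real.log (π y') - Real.log (π y)|
        ≤ |Real.log (π y')| + |Real.log (π y)| := abs_sub _ _
      _ ≤ A := by
        rw [hAdef]
        have h1 := Finset.le_sup' (fun y => |Real.log (π y)|) (Finset.mem_univ y')
        have h2 := Finset.le_sup' (fun y => |Real.log (π y)|) (Finset.mem_univ y)
        linarith
  have hA0 : 0 ≤ A := le_trans (abs_nonneg _) (hA y0 y0)
  -- conclusion
  refine ⟨δ, ⟨hδ0, by linarith⟩, ⌈(2*A+2) / (κ/2)⌉₊, ?_⟩
  intro y y' hyy r hn sstar hsmem hmin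
  apply key_pair π p hπ hp hp1 hXne y y' r B1 κ δ A hB1 (fun m x => hBle m y y' hyy x)
    hκpos (fun m hm => (hκD y y' m hyy hm).1) (fun m hm => (hκD y y' m hyy hm).2)
    hδ0 hδ14 hsmall (hA y y') ?_ sstar hsmem hmin
  have hceil : (2*A+2)/(κ/2) ≤ ((⌈(2*A+2) / (κ/2)⌉₊ : ℕ) : ℝ) := Nat.le_ceil _
  have hnn : ((⌈(2*A+2) / (κ/2)⌉₊ : ℕ) : ℝ) ≤ (effSample p r y y' : ℝ) :=
    Nat.cast_le.mpr hn
  have hκ2 : (0:ℝ) < κ/2 := by linarith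
  have h3 : 2*A+2 ≤ ((⌈(2*A+2) / (κ/2)⌉₊ : ℕ) : ℝ) * (κ/2) := by
    rw [div_le_iff₀ hκ2] at hceil
    linarith
  have h4 : ((⌈(2*A+2) / (κ/2)⌉₊ : ℕ) : ℝ) * (κ/2) ≤ (effSample p r y y' : ℝ) * (κ/2) :=
    mul_le_mul_of_nonneg_right hnn hκ2.le
  linarith


end

end MultiLLM
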